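/- Fix α ∈ (0,1) and an integer m ≥ 1. Let (A_n)_{n≥m} be a nondecreasing sequence of events (A_n ⊆ A_{n+1}) with A_n ∈ 𝓕_n for each n ≥ m and P(⋃_{n≥m} A_n) ≤ α. Define the process E_n := (1/α)·1_{A_n} for n ≥ m and E_n := 0 for n < m. Then (E_n)_{n≥1} is an e-process: for every stopping time τ′, E[E_{τ′}·1_{τ′<∞}] ≤ 1. -/

import Mathlib

open MeasureTheory Set
open scoped ENNReal

/-- **the miscoverage process of a confidence sequence is an e-process.**
Fix `α ∈ (0,1)` and `m ≥ 1`. Let `(A n)_{n ≥ m}` be a nondecreasing sequence of events with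
`A n ∈ ℱ n` and `P(⋃_{n ≥ m} A n) ≤ α`. Define `E n = (1/α)·1_{A n}` for `n ≥ m` and
`E n = 0` for `n < m`. Then for every stopping time `τ'`, `E[E_{τ'}·1_{τ' < ∞}] ≤ 1`. -/
theorem stmt1_miscoverage_is_eprocess
    {Ω : Type*} {m0 : MeasurableSpace Ω} (P : Measure Ω) [IsProbabilityMeasure P]
    (ℱ : MeasureTheory.Filtration ℕ m0) (α : ℝ) (hα : α ∈ Set.Ioo (0 : ℝ) 1)
    (m : ℕ) (hm : 1 ≤ m) (A : ℕ → Set Ω)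
    (hmono : ∀ n, m ≤ n → A n ⊆ A (n + 1))
    (hAmeas : ∀ n, m ≤ n → MeasurableSet[ℱ n] (A n))
    (hAα : P (⋃ n ∈ {n : ℕ | m ≤ n}, A n) ≤ ENNReal.ofReal α)
    (E : ℕ → Ω → ℝ≥0∞)
    (hE : ∀ n ω, E n ω = if m ≤ n then (A n).indicator (fun _ => ENNReal.ofReal (1 / α)) ω else 0)
    (τ' : Ω → ℕ∞) (hτ' : ∀ n : ℕ, MeasurableSet[ℱ n] {ω | τ' ω ≤ (n : ℕ∞)}) :
    ∫⁻ ω in {ω | τ' ω ≠ ⊤}, E (τ' ω).toNat ω ∂P ≤ 1 := by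
  obtain ⟨hα0, hα1⟩ := hα
  set U : Set Ω := ⋃ n ∈ {n : ℕ | m ≤ n}, A n with hU
  have hUmeas : MeasurableSet U := by
    refine MeasurableSet.biUnion (Set.to_countable _) (fun n hn => ℱ.le n _ (hAmeas n hn))
  have hbound : ∀ ω, E (τ' ω).toNat ω ≤ U.indicator (fun _ => ENNReal.ofReal (1 / α)) ω := by
    intro ω
    rw [hE]
    split_ifs with h
    · by_cases hA : ω ∈ A (τ' ω).toNat
      · rw [Set.indicator_of_mem hA, Set.indicator_of_mem]
        exact Set.mem_biUnion h hA
      · rw [Set.indicator_of_notMem hA]; exact zero_le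
    · exact zero_le
  calc ∫⁻ ω in {ω | τ' ω ≠ ⊤}, E (τ' ω).toNat ω ∂P
      ≤ ∫⁻ ω, U.indicator (fun _ => ENNReal.ofReal (1 / α)) ω ∂P := by
        refine le_trans (setLIntegral_le_lintegral _ _) (lintegral_mono hbound)
    _ = ENNReal.ofReal (1 / α) * P U := by
        simp [lintegral_indicator hUmeas, mul_comm]
    _ ≤ ENNReal.ofReal (1 / α) * ENNReal.ofReal α := by
        exact mul_le_mul_right hAα _
    _ = 1 := by
        rw [← ENNReal.ofReal_mul (by positivity)]
        rw [one_div, inv_mul_cancel₀ (ne_of_gt hα0)]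
        simp
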